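/- Fix λ > 0, j ∈ ℤ₊, n ∈ ℤ₊, and real numbers x_{i,m} for i ∈ {0, 1, j} and m ∈ {0, 1, n}. Define π_{i,m} = x_{i,m} + (αx_{0,m} + βx_{1,m})/λ, A_{i,m} = 1 − λπ_{i,m}, H = λ^{−1}[(λ + αA_{0,0})(λ + βA_{1,1}) − αβA_{1,0}A_{0,1}] (assumed nonzero), U_j = α(λ+α+β)(1 − βx_{1,1})x_{j,0} + αβ(λ+α+β)x_{1,0}x_{j,1}, and V_j = β(λ+α+β)(1 − αx_{0,0})x_{j,1} + αβ(λ+α+β)x_{0,1}x_{j,0}. Define φ_{j,n} as follows: if j = 0, φ_{0,n} = [(λ + βA_{1,1})π_{0,n} − βA_{0,1}π_{1,n}]/H; if j = 1, φ_{1,n} = [−αA_{1,0}π_{0,n} + (λ + αA_{0,0})π_{1,n}]/H; if j ≥ 2, φ_{j,n} = π_{j,n} + F_j π_{0,n} + G_j π_{1,n} with F_j = [αβA_{1,0}A_{j,1} − α(λ + βA_{1,1})A_{j,0}]/(λH) and G_j = [αβA_{0,1}A_{j,0} − β(λ + αA_{0,0})A_{j,1}]/(λH). Then φ_{j,n} =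 x_{j,n} + [U_j x_{0,n} + V_j x_{1,n}]/H. -/

import Mathlib

set_option maxHeartbeats 2000000


/-- The unified resolvent formula
`φ_{j,n} = x_{j,n} + [U_j x_{0,n} + V_j x_{1,n}]/H` for the killed process, where the
`x i m` play the role of catastrophe-free resolvent values `π̂_{i,m}(λ+γ)`,
`π i m = x i m + (α x 0 m + β x 1 m)/λ`, `A i m = 1 - λ (π i m)`,
`H = λ⁻¹[(λ + α A 0 0)(λ + β A 1 1) - αβ (A 1 0)(A 0 1)] ≠ 0`,
`U_j = α(λ+α+β)(1 - β x 1 1) x j 0 + αβ(λ+α+β) (x 1 0)(x j 1)`,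
`V_j = β(λ+α+β)(1 - α x 0 0) x j 1 + αβ(λ+α+β) (x 0 1)(x j 0)`, and `φ_{j,n}` is given
by the case formulas for `j = 0`, `j = 1` and `j ≥ 2`. -/
theorem stmt_11
    (α β : ℝ) (hα : 0 ≤ α) (hβ : 0 ≤ β)
    (l : ℝ) (hl : 0 < l)
    (j n : ℕ)
    (x : ℕ → ℕ → ℝ)
    (π A : ℕ → ℕ → ℝ)
    (hπ : ∀ i m, π i m = x i m + (α * x 0 m + β * x 1 m) / l)
    (hA : ∀ i m, A i m = 1 - l * π i m)
    (H : ℝ)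
    (hH : H = l⁻¹ * ((l + α * A 0 0) * (l + β * A 1 1) - α * β * A 1 0 * A 0 1))
    (hHne : H ≠ 0)
    (U V : ℝ)
    (hU : U = α * (l + α + β) * (1 - β * x 1 1) * x j 0
      + α * β * (l + α + β) * x 1 0 * x j 1)
    (hV : V = β * (l + α + β) * (1 - α * x 0 0) * x j 1
      + α * β * (l + α + β) * x 0 1 * x j 0)
    (φ : ℝ)
    (hφ0 : j = 0 → φ = ((l + β * A 1 1) * π 0 n - β * A 0 1 * π 1 n) / H)
    (hφ1 : j = 1 → φ = (-(α * A 1 0) * π 0 n + (l + α * A 0 0) * π 1 n) / H)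
    (hφj : 2 ≤ j → φ = π j n
      + (α * β * A 1 0 * A j 1 - α * (l + β * A 1 1) * A j 0) / (l * H) * π 0 n
      + (α * β * A 0 1 * A j 0 - β * (l + α * A 0 0) * A j 1) / (l * H) * π 1 n) :
    φ = x j n + (U * x 0 n + V * x 1 n) / H := by
  have hln : l ≠ 0 := hl.ne'
  have hlH : l * H = ((l + α*(1 - l*x 0 0 - (α*x 0 0 + β*x 1 0))) * (l + β*(1 - l*x 1 1 - (α*x 0 1 + β*x 1 1))) - α*β*(1 - l*x 1 0 - (α*x 0 0 + β*x 1 0))*(1 - l*x 0 1 - (α*x 0 1 + β*x 1 1))) := by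
    rw [hH, hA, hA, hA, hA, hπ, hπ, hπ, hπ]
    field_simp
    ring
  have hEne : ((l + α*(1 - l*x 0 0 - (α*x 0 0 + β*x 1 0))) * (l + β*(1 - l*x 1 1 - (α*x 0 1 + β*x 1 1))) - α*β*(1 - l*x 1 0 - (α*x 0 0 + β*x 1 0))*(1 - l*x 0 1 - (α*x 0 1 + β*x 1 1))) ≠ 0 := by rw [← hlH]; exact mul_ne_zero hln hHne
  have hHv : H = ((l + α*(1 - l*x 0 0 - (α*x 0 0 + β*x 1 0))) * (l + β*(1 - l*x 1 1 - (α*x 0 1 + β*x 1 1))) - α*β*(1 - l*x 1 0 - (α*x 0 0 + β*x 1 0))*(1 - l*x 0 1 - (α*x 0 1 + β*x 1 1))) / l := by rw [eq_div_iff hln, mul_comm]; exact hlH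
  simp only [hπ, hA] at hφ0 hφ1 hφj
  subst hU hV
  rcases Nat.lt_or_ge j 2 with h2 | h2
  · interval_cases j
    · rw [hφ0 rfl, hHv, div_div_eq_mul_div, div_div_eq_mul_div, add_div' _ _ _ hEne, div_left_inj' hEne]; field_simp; ring
    · rw [hφ1 rfl, hHv, div_div_eq_mul_div, div_div_eq_mul_div, add_div' _ _ _ hEne, div_left_inj' hEne]; field_simp; ring
  · rw [hφj h2, hHv]; field_simp; ring
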